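/- Let $(X, \mathcal{B})$ be a measurable space, $P$ a Markov kernel on $X$, and $m$ a $\sigma$-finite measure such that $\delta_x P$ and $\delta_y P$ have densities $p_x, p_y$ with respect to $m$. Then for every bounded measurable $f : X \to \mathbb{R}$, $|Pf(x) - Pf(y)|^2 \le 2\, \mathsf{He}_2(\delta_x P, \delta_y P)^2 \,\big(P(f^2)(x) + P(f^2)(y)\big)$, where $\mathsf{He}_2(\mu_0,\mu_1)^2 = \int (\sqrt{p_x} - \sqrt{p_y})^2\, dm$ is the squared Hellinger distance. -/
import Mathlib


open MeasureTheory ProbabilityTheory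

/-- Cauchy–Schwarz for real integrals. -/
lemma cs_integral {X : Type*} [MeasurableSpace X] (μ : Measure X) (g h : X → ℝ)
    (hg2 : Integrable (fun z => g z ^ 2) μ) (hh2 : Integrable (fun z => h z ^ 2) μ)
    (hgh : Integrable (fun z => g z * h z) μ) :
    (∫ z, g z * h z ∂μ) ^ 2 ≤ (∫ z, g z ^ 2 ∂μ) * (∫ z, h z ^ 2 ∂μ) := by
  set A := ∫ z, g z ^ 2 ∂μ with hA
  set B := ∫ z, g z * h z ∂μ with hB
  set C := ∫ z, h z ^ 2 ∂μ with hC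
  have hkey : ∀ t : ℝ, 0 ≤ A * t ^ 2 + 2 * B * t + C := by
    intro t
    have : A * t ^ 2 + 2 * B * t + C = ∫ z, (t * g z + h z) ^ 2 ∂μ := by
      have : (fun z => (t * g z + h z) ^ 2)
          = fun z => t ^ 2 * g z ^ 2 + (2 * t) * (g z * h z) + h z ^ 2 := by
        funext z; ring
      have e1 : Integrable (fun z => t ^ 2 * g z ^ 2 + 2 * t * (g z * h z)) μ := by
        exact (hg2.const_mul _).add (hgh.const_mul _)
      rw [this, integral_add e1 hh2, integral_add (hg2.const_mul _) (hgh.const_mul _),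
        integral_const_mul, integral_const_mul]
      ring
    rw [this]
    exact integral_nonneg fun z => sq_nonneg _
  have hkey' : ∀ t : ℝ, 0 ≤ A * (t * t) + (2 * B) * t + C := fun t => by
    have := hkey t; nlinarith [this]
  have hd := discrim_le_zero hkey'
  rw [discrim] at hd
  nlinarith [hd]

/-- Lemma 3.7: for a Markov kernel `P` whose transition measures from `x` and `y`
have densities `px, py` w.r.t. a common σ-finite measure `m`, and any bounded
measurable `f`,
`|Pf(x) - Pf(y)|² ≤ 2 He₂(δₓP, δᵧP)² (P(f²)(x) + P(f²)(y))`. -/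
theorem stmt_3 {X : Type*} [MeasurableSpace X]
    (P : Kernel X X) [IsMarkovKernel P]
    (m : Measure X) [SigmaFinite m]
    (x y : X) (px py : X → ℝ)
    (hpx_meas : Measurable px) (hpy_meas : Measurable py)
    (hpx_nonneg : ∀ z, 0 ≤ px z) (hpy_nonneg : ∀ z, 0 ≤ py z)
    (hpx : P x = m.withDensity (fun z => ENNReal.ofReal (px z)))
    (hpy : P y = m.withDensity (fun z => ENNReal.ofReal (py z)))
    (f : X → ℝ) (hf : Measurable f) (M : ℝ) (hfb : ∀ z, |f z| ≤ M) :
    |∫ z, f z ∂(P x) - ∫ z, f z ∂(P y)| ^ 2 ≤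
      2 * (∫ z, (Real.sqrt (px z) - Real.sqrt (py z)) ^ 2 ∂m) *
        ((∫ z, (f z) ^ 2 ∂(P x)) + ∫ z, (f z) ^ 2 ∂(P y)) := by
  -- rewrite integrals over the kernel measures as weighted integrals over m
  have key : ∀ (p : X → ℝ), Measurable p → (∀ z, 0 ≤ p z) → ∀ (g : X → ℝ),
      (∫ z, g z ∂(m.withDensity fun z => ENNReal.ofReal (p z)) = ∫ z, p z * g z ∂m) := by
    intro p hp hp0 g
    have : (fun z => ENNReal.ofReal (p z)) = fun z => (((p z).toNNReal : NNReal) : ENNReal) := rfl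
    rw [this, integral_withDensity_eq_integral_smul hp.real_toNNReal g]
    congr 1
    funext z
    simp [NNReal.smul_def, Real.coe_toNNReal _ (hp0 z)]
  have keyI : ∀ (p : X → ℝ), Measurable p → (∀ z, 0 ≤ p z) → ∀ (g : X → ℝ),
      Integrable g (m.withDensity fun z => ENNReal.ofReal (p z)) →
      Integrable (fun z => p z * g z) m := by
    intro p hp hp0 g hg
    have : (fun z => ENNReal.ofReal (p z)) = fun z => (((p z).toNNReal : NNReal) : ENNReal) := rfl
    rw [this, integrable_withDensity_iff_integrable_smul hp.real_toNNReal] at hg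
    refine hg.congr (ae_of_all _ fun z => ?_)
    simp [NNReal.smul_def, Real.coe_toNNReal _ (hp0 z)]
  -- integrability of f and f² w.r.t. P x and P y
  have hMnn : 0 ≤ M := le_trans (abs_nonneg _) (hfb x)
  have hintf : ∀ w : X, Integrable f (P w) := fun w =>
    (integrable_const M).mono' hf.aestronglyMeasurable (ae_of_all _ fun z => by
      simpa using hfb z)
  have hintf2 : ∀ w : X, Integrable (fun z => f z ^ 2) (P w) := fun w =>
    (integrable_const (M ^ 2)).mono' (hf.pow_const 2).aestronglyMeasurable
      (ae_of_all _ fun z => by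
        have := hfb z
        simp only [Real.norm_eq_abs, abs_pow]
        calc |f z| ^ 2 ≤ M ^ 2 := by nlinarith [abs_nonneg (f z)]
          _ = |M ^ 2| := (abs_of_nonneg (sq_nonneg M)).symm
          _ ≤ M ^ 2 := (abs_of_nonneg (sq_nonneg M)).le)
  -- integrability over m
  have hIx : Integrable (fun z => px z * f z) m := by
    refine keyI px hpx_meas hpx_nonneg f ?_; rw [← hpx]; exact hintf x
  have hIy : Integrable (fun z => py z * f z) m := by
    refine keyI py hpy_meas hpy_nonneg f ?_; rw [← hpy]; exact hintf y
  have hIx2 : Integrable (fun z => px z * f z ^ 2) m := by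
    refine keyI px hpx_meas hpx_nonneg _ ?_; rw [← hpx]; exact hintf2 x
  have hIy2 : Integrable (fun z => py z * f z ^ 2) m := by
    refine keyI py hpy_meas hpy_nonneg _ ?_; rw [← hpy]; exact hintf2 y
  have hIpx : Integrable px m := by
    have := keyI px hpx_meas hpx_nonneg (fun _ => 1) (by rw [← hpx]; exact integrable_const 1)
    simpa using this
  have hIpy : Integrable py m := by
    have := keyI py hpy_meas hpy_nonneg (fun _ => 1) (by rw [← hpy]; exact integrable_const 1)
    simpa using this
  set g : X → ℝ := fun z => Real.sqrt (px z) - Real.sqrt (py z) with hg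
  set h : X → ℝ := fun z => f z * (Real.sqrt (px z) + Real.sqrt (py z)) with hh
  have hgmeas : Measurable g := (hpx_meas.sqrt).sub (hpy_meas.sqrt)
  have hhmeas : Measurable h := hf.mul ((hpx_meas.sqrt).add (hpy_meas.sqrt))
  clear_value g h
  have sqx : ∀ z, Real.sqrt (px z) ^ 2 = px z := fun z => Real.sq_sqrt (hpx_nonneg z)
  have sqy : ∀ z, Real.sqrt (py z) ^ 2 = py z := fun z => Real.sq_sqrt (hpy_nonneg z)
  -- integrability of g², h², g*h
  have hbg : Integrable (fun z => 2 * (px z + py z)) m := by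
    exact (hIpx.add hIpy).const_mul 2
  have hIg2 : Integrable (fun z => g z ^ 2) m := by
    refine hbg.mono' (hgmeas.pow_const 2).aestronglyMeasurable (ae_of_all _ fun z => ?_)
    have h1 := sqx z; have h2 := sqy z
    rw [Real.norm_eq_abs, abs_of_nonneg (sq_nonneg _)]
    simp only [hg]
    nlinarith [Real.sqrt_nonneg (px z), Real.sqrt_nonneg (py z)]
  have hbh : Integrable (fun z => 2 * (px z * f z ^ 2 + py z * f z ^ 2)) m := by
    exact (hIx2.add hIy2).const_mul 2
  have hIh2 : Integrable (fun z => h z ^ 2) m := by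
    refine hbh.mono' (hhmeas.pow_const 2).aestronglyMeasurable (ae_of_all _ fun z => ?_)
    have h1 := sqx z; have h2 := sqy z
    rw [Real.norm_eq_abs, abs_of_nonneg (sq_nonneg _)]
    simp only [hh]
    nlinarith [sq_nonneg (f z * (Real.sqrt (px z) - Real.sqrt (py z)))]
  have hbgh : Integrable (fun z => 1/2 * (g z ^ 2 + h z ^ 2)) m := by
    exact (hIg2.add hIh2).const_mul (1/2 : ℝ)
  have hIgh : Integrable (fun z => g z * h z) m := by
    refine hbgh.mono' (hgmeas.mul hhmeas).aestronglyMeasurable (ae_of_all _ fun z => ?_)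
    rw [Real.norm_eq_abs]
    rcases abs_cases (g z * h z) with ⟨e, _⟩ | ⟨e, _⟩ <;> rw [e] <;>
      nlinarith [sq_nonneg (g z - h z), sq_nonneg (g z + h z)]
  -- the difference of kernel integrals equals ∫ g * h dm
  have hdiff : ∫ z, f z ∂(P x) - ∫ z, f z ∂(P y) = ∫ z, g z * h z ∂m := by
    rw [hpx, hpy, key px hpx_meas hpx_nonneg f, key py hpy_meas hpy_nonneg f,
      ← integral_sub hIx hIy]
    refine integral_congr_ae (ae_of_all _ fun z => ?_)
    have h1 := sqx z; have h2 := sqy z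
    simp only [hg, hh]
    linear_combination (-(f z)) * h1 + f z * h2
  -- the bound on ∫ h²
  have hSx : ∫ z, f z ^ 2 ∂(P x) = ∫ z, px z * f z ^ 2 ∂m := by
    rw [hpx]; exact key px hpx_meas hpx_nonneg _
  have hSy : ∫ z, f z ^ 2 ∂(P y) = ∫ z, py z * f z ^ 2 ∂m := by
    rw [hpy]; exact key py hpy_meas hpy_nonneg _
  have hh2bound : ∫ z, h z ^ 2 ∂m ≤
      2 * ((∫ z, f z ^ 2 ∂(P x)) + ∫ z, f z ^ 2 ∂(P y)) := by
    rw [hSx, hSy, ← integral_add hIx2 hIy2, ← integral_const_mul]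
    refine integral_mono hIh2 hbh fun z => ?_
    have h1 := sqx z; have h2 := sqy z
    simp only [hh]
    nlinarith [sq_nonneg (f z * (Real.sqrt (px z) - Real.sqrt (py z)))]
  have hcs := cs_integral m g h hIg2 hIh2 hIgh
  have hg2nn : 0 ≤ ∫ z, g z ^ 2 ∂m := integral_nonneg fun z => sq_nonneg _
  calc |∫ z, f z ∂(P x) - ∫ z, f z ∂(P y)| ^ 2
      = (∫ z, g z * h z ∂m) ^ 2 := by rw [sq_abs, hdiff]
    _ ≤ (∫ z, g z ^ 2 ∂m) * (∫ z, h z ^ 2 ∂m) := hcs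
    _ ≤ (∫ z, g z ^ 2 ∂m) * (2 * ((∫ z, f z ^ 2 ∂(P x)) + ∫ z, f z ^ 2 ∂(P y))) :=
        mul_le_mul_of_nonneg_left hh2bound hg2nn
    _ = 2 * (∫ z, (Real.sqrt (px z) - Real.sqrt (py z)) ^ 2 ∂m) *
          ((∫ z, f z ^ 2 ∂(P x)) + ∫ z, f z ^ 2 ∂(P y)) := by
        simp only [hg]; ring
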